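/- arXiv:1006.5609 — 2 statements merged into one kernel-verified Lean document; each statement's English description precedes it below -/
import Mathlib

section
/- Let ℳ be a right rigid monoidal category and t_X : X → X^∨∨ a family of isomorphisms (not assumed natural), with induced left duality data ẽv, c̃oev. Then t is a natural transformation Id ⇒ (·)^∨∨ if and only if for every morphism φ : X → Y the right transpose φ^∨ : Y^∨ → X^∨ (defined from ev_Y and coev_X) equals the left transpose ρ_{X^∨} ∘ (id_{X^∨} ⊗ ẽv_Y) ∘ α_{X^∨,Y,Y^∨} ∘ ((id_{X^∨} ⊗ φ) ⊗ id_{Y^∨}) ∘ (c̃oev_X ⊗ id_{Y^∨}) ∘ λ_{Y^∨}⁻¹ : Y^∨ → X^∨. -/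
open CategoryTheory MonoidalCategory

universe v u

/-- A right duality structure on a monoidal category: every object `A` is assigned a dual
`A^∨` together with evaluation `ev_A : A^∨ ⊗ A → I` and coevaluation `coev_A : I → A ⊗ A^∨`
subject to the two Zorro moves. -/
structure RightRigidData (C : Type u) [Category.{v} C] [MonoidalCategory C] where
  dual : C → C
  ev : ∀ X : C, dual X ⊗ X ⟶ 𝟙_ C
  coev : ∀ X : C, 𝟙_ C ⟶ X ⊗ dual X
  zorro₁ : ∀ X : C,
    (λ_ X).inv ≫ (coev X ▷ X) ≫ (α_ X (dual X) X).hom ≫ (X ◁ ev X) ≫ (ρ_ X).hom = 𝟙 X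
  zorro₂ : ∀ X : C,
    (ρ_ (dual X)).inv ≫ (dual X ◁ coev X) ≫ (α_ (dual X) X (dual X)).inv ≫
      (ev X ▷ dual X) ≫ (λ_ (dual X)).hom = 𝟙 (dual X)

variable {C : Type u} [Category.{v} C] [MonoidalCategory C]

namespace RightRigidData

variable (D : RightRigidData C)

/-- The dual (right transpose) of a morphism,
`φ^∨ = λ ∘ (ev_Y ⊗ id) ∘ α⁻¹ ∘ (id ⊗ (φ ⊗ id)) ∘ (id ⊗ coev_X) ∘ ρ⁻¹`. -/
noncomputable def dualHom {X Y : C} (f : X ⟶ Y) : D.dual Y ⟶ D.dual X :=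
  (ρ_ (D.dual Y)).inv ≫ (D.dual Y ◁ D.coev X) ≫ (D.dual Y ◁ (f ▷ D.dual X)) ≫
    (α_ (D.dual Y) Y (D.dual X)).inv ≫ (D.ev Y ▷ D.dual X) ≫ (λ_ (D.dual X)).hom

/-- `ν⁰ = λ_{I^∨} ∘ coev_I : I → I^∨`. -/
noncomputable def nu0 : 𝟙_ C ⟶ D.dual (𝟙_ C) :=
  D.coev (𝟙_ C) ≫ (λ_ (D.dual (𝟙_ C))).hom

/-- The canonical morphism `ν²_{X,Y} : X^∨ ⊗ Y^∨ → (Y ⊗ X)^∨` built from the right duality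
data `ev_X`, `ev_Y` and `coev_{Y⊗X}`. -/
noncomputable def nu2 (X Y : C) : D.dual X ⊗ D.dual Y ⟶ D.dual (Y ⊗ X) :=
  (D.dual X ◁ (ρ_ (D.dual Y)).inv) ≫
  (D.dual X ◁ (D.dual Y ◁ D.coev (Y ⊗ X))) ≫
  (D.dual X ◁ (α_ (D.dual Y) (Y ⊗ X) (D.dual (Y ⊗ X))).inv) ≫
  (D.dual X ◁ ((α_ (D.dual Y) Y X).inv ▷ D.dual (Y ⊗ X))) ≫
  (D.dual X ◁ ((D.ev Y ▷ X) ▷ D.dual (Y ⊗ X))) ≫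
  (D.dual X ◁ ((λ_ X).hom ▷ D.dual (Y ⊗ X))) ≫
  (α_ (D.dual X) X (D.dual (Y ⊗ X))).inv ≫
  (D.ev X ▷ D.dual (Y ⊗ X)) ≫ (λ_ (D.dual (Y ⊗ X))).hom

/-- Left (tilded) evaluation `ẽv_X = ev_{X^∨} ∘ (t_X ⊗ id_{X^∨})` induced by a family of
isomorphisms `t_X : X ≅ X^∨∨`. -/
noncomputable def tev (t : ∀ X : C, X ≅ D.dual (D.dual X)) (X : C) : X ⊗ D.dual X ⟶ 𝟙_ C :=
  ((t X).hom ▷ D.dual X) ≫ D.ev (D.dual X)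

/-- Left (tilded) coevaluation `c̃oev_X = (id_{X^∨} ⊗ t_X⁻¹) ∘ coev_{X^∨}`. -/
noncomputable def tcoev (t : ∀ X : C, X ≅ D.dual (D.dual X)) (X : C) : 𝟙_ C ⟶ D.dual X ⊗ X :=
  D.coev (D.dual X) ≫ (D.dual X ◁ (t X).inv)

/-- A pivotal structure: a monoidal natural isomorphism `t : Id ⇒ (·)^∨∨`, where the
double-dual functor carries the canonical monoidal structure
`ω⁰ = ((ν⁰)⁻¹)^∨ ∘ ν⁰` and `ω²_{X,Y} = ((ν²_{Y,X})⁻¹)^∨ ∘ ν²_{X^∨,Y^∨}`.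
(The inverses of `ν⁰` and `ν²` are carried along as data with their defining equations.) -/
structure Pivotal (D : RightRigidData C) where
  t : ∀ X : C, X ≅ D.dual (D.dual X)
  naturality : ∀ {X Y : C} (f : X ⟶ Y),
    f ≫ (t Y).hom = (t X).hom ≫ D.dualHom (D.dualHom f)
  nu0Inv : D.dual (𝟙_ C) ⟶ 𝟙_ C
  nu0_comp : D.nu0 ≫ nu0Inv = 𝟙 _
  comp_nu0 : nu0Inv ≫ D.nu0 = 𝟙 _
  nu2Inv : ∀ X Y : C, D.dual (Y ⊗ X) ⟶ D.dual X ⊗ D.dual Y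
  nu2_comp : ∀ X Y : C, D.nu2 X Y ≫ nu2Inv X Y = 𝟙 _
  comp_nu2 : ∀ X Y : C, nu2Inv X Y ≫ D.nu2 X Y = 𝟙 _
  monoidal_unit : (t (𝟙_ C)).hom = D.nu0 ≫ D.dualHom nu0Inv
  monoidal_tensor : ∀ X Y : C,
    ((t X).hom ⊗ₘ (t Y).hom) ≫ D.nu2 (D.dual X) (D.dual Y) ≫ D.dualHom (nu2Inv Y X)
      = (t (X ⊗ Y)).hom

/-- Action of the defect `X` on bulk fields, the defect wrapped counterclockwise:
`𝒟_l(X)(φ) = ev_X ∘ (id_{X^∨} ⊗ (λ_X ∘ (φ ⊗ id_X) ∘ λ_X⁻¹)) ∘ c̃oev_X`. -/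
noncomputable def Dl (t : ∀ X : C, X ≅ D.dual (D.dual X)) (X : C) (φ : 𝟙_ C ⟶ 𝟙_ C) :
    𝟙_ C ⟶ 𝟙_ C :=
  D.tcoev t X ≫ (D.dual X ◁ ((λ_ X).inv ≫ (φ ▷ X) ≫ (λ_ X).hom)) ≫ D.ev X

/-- `𝒟_r(X)(φ) = ẽv_X ∘ ((ρ_X ∘ (id_X ⊗ φ) ∘ ρ_X⁻¹) ⊗ id_{X^∨}) ∘ coev_X`. -/
noncomputable def Dr (t : ∀ X : C, X ≅ D.dual (D.dual X)) (X : C) (φ : 𝟙_ C ⟶ 𝟙_ C) :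
    𝟙_ C ⟶ 𝟙_ C :=
  D.coev X ≫ (((ρ_ X).inv ≫ (X ◁ φ) ≫ (ρ_ X).hom) ▷ D.dual X) ≫ D.tev t X

end RightRigidData

namespace RightRigidData

variable (D : RightRigidData C)

/-- The exact pairing `(X, X^∨)` coming from a right duality structure. -/
noncomputable def exact (X : C) : ExactPairing X (D.dual X) where
  coevaluation' := D.coev X
  evaluation' := D.ev X
  coevaluation_evaluation' := by
    rw [← cancel_epi (ρ_ (D.dual X)).inv, ← cancel_mono (λ_ (D.dual X)).hom]
    simpa using D.zorro₂ X
  evaluation_coevaluation' := by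
    rw [← cancel_epi (λ_ X).inv, ← cancel_mono (ρ_ X).hom]
    simpa using D.zorro₁ X

/-- Every object has a right dual, namely `D.dual X`. -/
noncomputable def hrd (X : C) : HasRightDual X :=
  letI := D.exact X
  ⟨D.dual X⟩

/-- The inverse mate `Y ⟶ X` of a morphism `g : X^∨ ⟶ Y^∨`. -/
noncomputable def lmate {X Y : C} (g : D.dual X ⟶ D.dual Y) : Y ⟶ X :=
  (λ_ Y).inv ≫ (D.coev X ▷ Y) ≫ ((X ◁ g) ▷ Y) ≫ (α_ X (D.dual Y) Y).hom ≫
    (X ◁ D.ev Y) ≫ (ρ_ X).hom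

lemma mate_mate1' {X Y : C} [HasRightDual X] [HasRightDual Y] (f : X ⟶ Y) :
    (ᘁ(fᘁ)) = f := by
  dsimp [leftAdjointMate]
  rw [← comp_whiskerRight_assoc, coevaluation_comp_rightAdjointMate, comp_whiskerRight_assoc]
  calc
    _ = 𝟙 _ ⊗≫ η_ X (Xᘁ) ▷ X ⊗≫ (f ▷ ((Xᘁ : C) ⊗ X) ≫ Y ◁ ε_ X (Xᘁ)) ⊗≫ 𝟙 _ := by
      monoidal
    _ = 𝟙 X ⊗≫ (η_ X (Xᘁ) ▷ X ⊗≫ X ◁ ε_ X (Xᘁ)) ⊗≫ f := by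
      rw [← whisker_exchange]; monoidal
    _ = f := by rw [ExactPairing.evaluation_coevaluation'']; monoidal

lemma mate_mate2' {X Y : C} [HasRightDual X] [HasRightDual Y] (g : Yᘁ ⟶ Xᘁ) :
    ((ᘁg)ᘁ) = g := by
  dsimp [rightAdjointMate]
  rw [← MonoidalCategory.whiskerLeft_comp_assoc,
    show η_ X (Xᘁ) ≫ (ᘁg) ▷ (Xᘁ) = η_ Y (Yᘁ) ≫ Y ◁ g from coevaluation_comp_leftAdjointMate g,
    MonoidalCategory.whiskerLeft_comp_assoc]
  calc
    _ = 𝟙 _ ⊗≫ (Yᘁ : C) ◁ η_ Y (Yᘁ) ⊗≫ (((Yᘁ : C) ⊗ Y) ◁ g ≫ ε_ Y (Yᘁ) ▷ (Xᘁ : C)) ⊗≫ 𝟙 _ := by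
      monoidal
    _ = 𝟙 _ ⊗≫ ((Yᘁ : C) ◁ η_ Y (Yᘁ) ⊗≫ ε_ Y (Yᘁ) ▷ (Yᘁ : C)) ⊗≫ g := by
      rw [whisker_exchange]; monoidal
    _ = g := by rw [ExactPairing.coevaluation_evaluation'']; monoidal

lemma lmate_dualHom {X Y : C} (f : X ⟶ Y) : D.lmate (D.dualHom f) = f := by
  letI := D.hrd X; letI := D.hrd Y
  exact mate_mate1' f

lemma dualHom_lmate {X Y : C} (g : D.dual X ⟶ D.dual Y) : D.dualHom (D.lmate g) = g := by
  letI := D.hrd X; letI := D.hrd Y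
  exact mate_mate2' (X := Y) (Y := X) g

end RightRigidData


open RightRigidData

/-- The left transpose of `φ : X → Y` with respect to the left duality data `ẽv`, `c̃oev`
induced by a family of isomorphisms `t_X : X → X^∨∨`:
`ρ_{X^∨} ∘ (id_{X^∨} ⊗ ẽv_Y) ∘ α ∘ ((id_{X^∨} ⊗ φ) ⊗ id_{Y^∨}) ∘ (c̃oev_X ⊗ id_{Y^∨}) ∘ λ⁻¹`. -/
noncomputable def leftTranspose {C : Type u} [Category.{v} C] [MonoidalCategory C]
    (D : RightRigidData C) (t : ∀ X : C, X ≅ D.dual (D.dual X))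
    {X Y : C} (φ : X ⟶ Y) : D.dual Y ⟶ D.dual X :=
  (λ_ (D.dual Y)).inv ≫ (D.tcoev t X ▷ D.dual Y) ≫
    ((D.dual X ◁ φ) ▷ D.dual Y) ≫ (α_ (D.dual X) Y (D.dual Y)).hom ≫
    (D.dual X ◁ D.tev t Y) ≫ (ρ_ (D.dual X)).hom


lemma leftTranspose_eq_lmate {C : Type u} [Category.{v} C] [MonoidalCategory C]
    (D : RightRigidData C) (t : ∀ X : C, X ≅ D.dual (D.dual X))
    {X Y : C} (φ : X ⟶ Y) :
    leftTranspose D t φ = D.lmate ((t X).inv ≫ φ ≫ (t Y).hom) := by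
  simp only [leftTranspose, RightRigidData.lmate, RightRigidData.tcoev, RightRigidData.tev,
    MonoidalCategory.whiskerLeft_comp, comp_whiskerRight, Category.assoc,
    associator_naturality_middle_assoc]

/-- **Statement 8.** Let `t_X : X → X^∨∨` be a family of isomorphisms in a right rigid
monoidal category.  Then `t` is a natural transformation `Id ⇒ (·)^∨∨` if and only if for
every morphism `φ : X → Y` the right transpose `φ^∨` coincides with the left transpose
built from the induced left duality data `ẽv`, `c̃oev`. -/
theorem statement8 {C : Type u} [Category.{v} C] [MonoidalCategory C]
    (D : RightRigidData C) (t : ∀ X : C, X ≅ D.dual (D.dual X)) :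
    (∀ {X Y : C} (f : X ⟶ Y), f ≫ (t Y).hom = (t X).hom ≫ D.dualHom (D.dualHom f)) ↔
    (∀ {X Y : C} (φ : X ⟶ Y), D.dualHom φ = leftTranspose D t φ) := by
  constructor
  · intro hnat X Y φ
    have h2 : D.dualHom (D.dualHom φ) = (t X).inv ≫ φ ≫ (t Y).hom := by
      rw [← cancel_epi (t X).hom, ← hnat φ]
      simp
    rw [leftTranspose_eq_lmate, ← h2]
    exact (D.lmate_dualHom (D.dualHom φ)).symm
  · intro h X Y f
    have h1 := h f
    rw [leftTranspose_eq_lmate] at h1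
    have h2 := congrArg D.dualHom h1
    rw [D.dualHom_lmate] at h2
    rw [h2]
    simp
end

section
/- Let ℳ be a right rigid monoidal category and t : Id ⇒ (·)^∨∨ a natural isomorphism, with induced left duality data ẽv, c̃oev. Then t is monoidal with respect to the canonical monoidal structure (ω², ω⁰) on the double-dual functor (i.e. t is a pivotal structure) if and only if for all X, Y ∈ ℳ the morphism Y^∨ ⊗ X^∨ → (X ⊗ Y)^∨ obtained by pairing with coev_{X⊗Y} and contracting via the nested evaluations ev_X and ev_Y (right-duality bending) coincides with the morphism Y^∨ ⊗ X^∨ → (X ⊗ Y)^∨ obtained by pairing with c̃oev_{X⊗Y} and contracting via the nested evaluations ẽv_Y and ẽv_X (left-duality bending). -/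
open CategoryTheory MonoidalCategory

universe v u

variable {C : Type u} [Category.{v} C] [MonoidalCategory C]

open RightRigidData

/-- The left-duality bending morphism `Y^∨ ⊗ X^∨ → (X ⊗ Y)^∨`: pair with `c̃oev_{X⊗Y}` and
contract via the nested evaluations `ẽv_Y` (inner) and `ẽv_X` (outer). -/
noncomputable def leftBend {C : Type u} [Category.{v} C] [MonoidalCategory C]
    (D : RightRigidData C) (t : ∀ X : C, X ≅ D.dual (D.dual X)) (X Y : C) :
    D.dual Y ⊗ D.dual X ⟶ D.dual (X ⊗ Y) :=
  (λ_ (D.dual Y ⊗ D.dual X)).inv ≫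
  (D.tcoev t (X ⊗ Y) ▷ (D.dual Y ⊗ D.dual X)) ≫
  (α_ (D.dual (X ⊗ Y)) (X ⊗ Y) (D.dual Y ⊗ D.dual X)).hom ≫
  (D.dual (X ⊗ Y) ◁
    ((α_ X Y (D.dual Y ⊗ D.dual X)).hom ≫
     (X ◁ (α_ Y (D.dual Y) (D.dual X)).inv) ≫
     (X ◁ (D.tev t Y ▷ D.dual X)) ≫
     (X ◁ (λ_ (D.dual X)).hom) ≫ D.tev t X)) ≫
  (ρ_ (D.dual (X ⊗ Y))).hom

section Helpers

namespace RightRigidData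

variable {C : Type u} [Category.{v} C] [MonoidalCategory C] (D : RightRigidData C)

theorem zorro₁'' (X : C) :
    D.coev X ▷ X ≫ (α_ X (D.dual X) X).hom ≫ X ◁ D.ev X = (λ_ X).hom ≫ (ρ_ X).inv := by
  have h := D.zorro₁ X
  rw [Iso.inv_comp_eq] at h
  rw [← cancel_mono (ρ_ X).hom]
  simpa [monoidalComp] using h

theorem zorro₂'' (X : C) :
    D.dual X ◁ D.coev X ≫ (α_ (D.dual X) X (D.dual X)).inv ≫ D.ev X ▷ D.dual X
      = (ρ_ (D.dual X)).hom ≫ (λ_ (D.dual X)).inv := by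
  have h := D.zorro₂ X
  rw [Iso.inv_comp_eq] at h
  rw [← cancel_mono (λ_ (D.dual X)).hom]
  simpa [monoidalComp] using h

/-- recovery of a morphism into a dual from its pairing with `ev`. -/
theorem recovR {W R : C} (u : W ⟶ D.dual R) :
    u = (ρ_ W).inv ≫ W ◁ D.coev R ≫ (α_ W R (D.dual R)).inv ≫
        ((u ▷ R ≫ D.ev R) ▷ D.dual R) ≫ (λ_ (D.dual R)).hom := by
  calc u = u ≫ ((ρ_ (D.dual R)).inv ≫ D.dual R ◁ D.coev R ≫ (α_ _ _ _).inv ≫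
        D.ev R ▷ D.dual R ≫ (λ_ (D.dual R)).hom) := by rw [D.zorro₂ R, Category.comp_id]
    _ = 𝟙 _ ⊗≫ (u ▷ 𝟙_ C ≫ D.dual R ◁ D.coev R) ⊗≫ D.ev R ▷ D.dual R ⊗≫ 𝟙 _ := by
        monoidal
    _ = 𝟙 _ ⊗≫ (W ◁ D.coev R ≫ u ▷ (R ⊗ D.dual R)) ⊗≫ D.ev R ▷ D.dual R ⊗≫ 𝟙 _ := by
        rw [← whisker_exchange]
    _ = _ := by monoidal

theorem eqR {W R : C} {f g : W ⟶ D.dual R}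
    (h : f ▷ R ≫ D.ev R = g ▷ R ≫ D.ev R) : f = g := by
  rw [D.recovR f, D.recovR g, h]

/-- pairing of the dual (transpose) morphism. -/
theorem dual_pair {P Q : C} (φ : P ⟶ Q) :
    D.dualHom φ ▷ P ≫ D.ev P = D.dual Q ◁ φ ≫ D.ev Q := by
  dsimp only [dualHom]
  calc _ = 𝟙 _ ⊗≫ D.dual Q ◁ D.coev P ▷ P ⊗≫
        (((D.dual Q ◁ φ ≫ D.ev Q) ▷ (D.dual P ⊗ P)) ≫ 𝟙_ C ◁ D.ev P) ⊗≫ 𝟙 _ := by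
        monoidal
    _ = 𝟙 _ ⊗≫ D.dual Q ◁ D.coev P ▷ P ⊗≫
        (((D.dual Q ⊗ P) ◁ D.ev P) ≫ ((D.dual Q ◁ φ ≫ D.ev Q) ▷ 𝟙_ C)) ⊗≫ 𝟙 _ := by
        rw [← whisker_exchange]
    _ = 𝟙 _ ⊗≫ D.dual Q ◁ (D.coev P ▷ P ≫ (α_ P (D.dual P) P).hom ≫ P ◁ D.ev P) ⊗≫
        (D.dual Q ◁ φ ≫ D.ev Q) ⊗≫ 𝟙 _ := by
        monoidal
    _ = _ := by rw [D.zorro₁'']; monoidal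


theorem dualHom_id (X : C) : D.dualHom (𝟙 X) = 𝟙 (D.dual X) := by
  apply D.eqR
  rw [D.dual_pair]
  simp

theorem dualHom_comp {X Y Z : C} (f : X ⟶ Y) (g : Y ⟶ Z) :
    D.dualHom (f ≫ g) = D.dualHom g ≫ D.dualHom f := by
  apply D.eqR
  rw [D.dual_pair, comp_whiskerRight, Category.assoc, D.dual_pair f,
    ← whisker_exchange_assoc, D.dual_pair g, ← MonoidalCategory.whiskerLeft_comp_assoc]

section WithT

variable (t : ∀ X : C, X ≅ D.dual (D.dual X))

theorem lzorro₂ (X : C) :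
    (λ_ (D.dual X)).inv ≫ D.tcoev t X ▷ D.dual X ≫ (α_ (D.dual X) X (D.dual X)).hom ≫
      D.dual X ◁ D.tev t X ≫ (ρ_ (D.dual X)).hom = 𝟙 (D.dual X) := by
  dsimp only [tcoev, tev]
  calc _ = 𝟙 _ ⊗≫ D.coev (D.dual X) ▷ D.dual X ⊗≫
        D.dual X ◁ (((t X).inv ≫ (t X).hom) ▷ D.dual X) ⊗≫
        D.dual X ◁ D.ev (D.dual X) ⊗≫ 𝟙 _ := by monoidal
    _ = (λ_ (D.dual X)).inv ≫ D.coev (D.dual X) ▷ D.dual X ≫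
        (α_ (D.dual X) (D.dual (D.dual X)) (D.dual X)).hom ≫
        D.dual X ◁ D.ev (D.dual X) ≫ (ρ_ (D.dual X)).hom := by
        rw [Iso.inv_hom_id]; monoidal
    _ = 𝟙 _ := D.zorro₁ (D.dual X)

theorem lzorro₁ (X : C) :
    (ρ_ X).inv ≫ X ◁ D.tcoev t X ≫ (α_ X (D.dual X) X).inv ≫
      D.tev t X ▷ X ≫ (λ_ X).hom = 𝟙 X := by
  dsimp only [tcoev, tev]
  calc _ = 𝟙 _ ⊗≫ (X ◁ (D.coev (D.dual X) ≫ D.dual X ◁ (t X).inv) ≫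
          (t X).hom ▷ (D.dual X ⊗ X)) ⊗≫ D.ev (D.dual X) ▷ X ⊗≫ 𝟙 _ := by monoidal
    _ = 𝟙 _ ⊗≫ ((t X).hom ▷ 𝟙_ C ≫
          D.dual (D.dual X) ◁ (D.coev (D.dual X) ≫ D.dual X ◁ (t X).inv)) ⊗≫
          D.ev (D.dual X) ▷ X ⊗≫ 𝟙 _ := by rw [whisker_exchange]
    _ = 𝟙 _ ⊗≫ (t X).hom ▷ 𝟙_ C ⊗≫ D.dual (D.dual X) ◁ D.coev (D.dual X) ⊗≫
          (((D.dual (D.dual X)) ⊗ D.dual X) ◁ (t X).inv ≫ D.ev (D.dual X) ▷ X) ⊗≫ 𝟙 _ := by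
        monoidal
    _ = 𝟙 _ ⊗≫ (t X).hom ▷ 𝟙_ C ⊗≫ D.dual (D.dual X) ◁ D.coev (D.dual X) ⊗≫
          (D.ev (D.dual X) ▷ D.dual (D.dual X) ≫ 𝟙_ C ◁ (t X).inv) ⊗≫ 𝟙 _ := by
        rw [whisker_exchange]
    _ = (t X).hom ≫ ((ρ_ (D.dual (D.dual X))).inv ≫
          D.dual (D.dual X) ◁ D.coev (D.dual X) ≫
          (α_ (D.dual (D.dual X)) (D.dual X) (D.dual (D.dual X))).inv ≫
          D.ev (D.dual X) ▷ D.dual (D.dual X) ≫ (λ_ (D.dual (D.dual X))).hom) ≫ (t X).inv := by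
        monoidal
    _ = 𝟙 X := by rw [D.zorro₂ (D.dual X)]; simp

theorem recovL {W R : C} (u : W ⟶ D.dual R) :
    u = (λ_ W).inv ≫ D.tcoev t R ▷ W ≫ (α_ (D.dual R) R W).hom ≫
        D.dual R ◁ (R ◁ u ≫ D.tev t R) ≫ (ρ_ (D.dual R)).hom := by
  calc u = u ≫ ((λ_ (D.dual R)).inv ≫ D.tcoev t R ▷ D.dual R ≫
        (α_ (D.dual R) R (D.dual R)).hom ≫ D.dual R ◁ D.tev t R ≫ (ρ_ (D.dual R)).hom) := by
        rw [D.lzorro₂ t R, Category.comp_id]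
    _ = 𝟙 _ ⊗≫ (𝟙_ C ◁ u ≫ D.tcoev t R ▷ D.dual R) ⊗≫ D.dual R ◁ D.tev t R ⊗≫ 𝟙 _ := by
        monoidal
    _ = 𝟙 _ ⊗≫ (D.tcoev t R ▷ W ≫ (D.dual R ⊗ R) ◁ u) ⊗≫ D.dual R ◁ D.tev t R ⊗≫ 𝟙 _ := by
        rw [whisker_exchange]
    _ = _ := by monoidal

theorem eqL {W R : C} {f g : W ⟶ D.dual R}
    (h : R ◁ f ≫ D.tev t R = R ◁ g ≫ D.tev t R) : f = g := by
  rw [D.recovL t f, D.recovL t g, h]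

end WithT


theorem nu2_pair (X Y : C) :
    D.nu2 X Y ▷ (Y ⊗ X) ≫ D.ev (Y ⊗ X) =
      (α_ (D.dual X) (D.dual Y) (Y ⊗ X)).hom ≫
        D.dual X ◁ ((α_ (D.dual Y) Y X).inv ≫ (D.ev Y ▷ X) ≫ (λ_ X).hom) ≫ D.ev X := by
  dsimp only [nu2]
  calc _ = 𝟙 _ ⊗≫ ((D.dual X ⊗ D.dual Y : C)) ◁ (D.coev (Y ⊗ X) ▷ (Y ⊗ X)) ⊗≫
        ((((α_ (D.dual X) (D.dual Y) (Y ⊗ X)).hom ≫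
            D.dual X ◁ ((α_ (D.dual Y) Y X).inv ≫ (D.ev Y ▷ X) ≫ (λ_ X).hom) ≫ D.ev X) ▷
          ((D.dual (Y ⊗ X) ⊗ (Y ⊗ X) : C))) ≫ 𝟙_ C ◁ D.ev (Y ⊗ X)) ⊗≫ 𝟙 _ := by
        monoidal
    _ = 𝟙 _ ⊗≫ ((D.dual X ⊗ D.dual Y : C)) ◁ (D.coev (Y ⊗ X) ▷ (Y ⊗ X)) ⊗≫
        (((((D.dual X ⊗ D.dual Y) ⊗ (Y ⊗ X) : C)) ◁ D.ev (Y ⊗ X)) ≫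
          (((α_ (D.dual X) (D.dual Y) (Y ⊗ X)).hom ≫
            D.dual X ◁ ((α_ (D.dual Y) Y X).inv ≫ (D.ev Y ▷ X) ≫ (λ_ X).hom) ≫ D.ev X) ▷
           𝟙_ C)) ⊗≫ 𝟙 _ := by
        rw [← whisker_exchange]
    _ = 𝟙 _ ⊗≫ ((D.dual X ⊗ D.dual Y : C)) ◁ (D.coev (Y ⊗ X) ▷ (Y ⊗ X) ≫ (α_ (Y ⊗ X) (D.dual (Y ⊗ X)) (Y ⊗ X)).hom ≫ (Y ⊗ X) ◁ D.ev (Y ⊗ X)) ⊗≫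
        ((α_ (D.dual X) (D.dual Y) (Y ⊗ X)).hom ≫
            D.dual X ◁ ((α_ (D.dual Y) Y X).inv ≫ (D.ev Y ▷ X) ≫ (λ_ X).hom) ≫ D.ev X) ⊗≫
        𝟙 _ := by monoidal
    _ = _ := by rw [D.zorro₁'']; monoidal

section WithT2

variable (t : ∀ X : C, X ≅ D.dual (D.dual X))

theorem leftBend_pair (X Y : C) :
    (X ⊗ Y) ◁ leftBend D t X Y ≫ D.tev t (X ⊗ Y) =
      (((t X).hom ⊗ₘ (t Y).hom) ▷ (D.dual Y ⊗ D.dual X)) ≫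
      (α_ (D.dual (D.dual X)) (D.dual (D.dual Y)) (D.dual Y ⊗ D.dual X)).hom ≫
        D.dual (D.dual X) ◁ ((α_ (D.dual (D.dual Y)) (D.dual Y) (D.dual X)).inv ≫
          (D.ev (D.dual Y) ▷ D.dual X) ≫ (λ_ (D.dual X)).hom) ≫ D.ev (D.dual X) := by
  dsimp only [leftBend]
  calc _ = 𝟙 _ ⊗≫ ((X ⊗ Y : C)) ◁ (D.tcoev t (X ⊗ Y) ▷ (D.dual Y ⊗ D.dual X)) ⊗≫
        (((((X ⊗ Y) ⊗ D.dual (X ⊗ Y) : C)) ◁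
            ((α_ X Y (D.dual Y ⊗ D.dual X)).hom ≫
             X ◁ (α_ Y (D.dual Y) (D.dual X)).inv ≫
             X ◁ (D.tev t Y ▷ D.dual X) ≫ X ◁ (λ_ (D.dual X)).hom ≫ D.tev t X)) ≫
          (D.tev t (X ⊗ Y) ▷ 𝟙_ C)) ⊗≫ 𝟙 _ := by
        monoidal
    _ = 𝟙 _ ⊗≫ ((X ⊗ Y : C)) ◁ (D.tcoev t (X ⊗ Y) ▷ (D.dual Y ⊗ D.dual X)) ⊗≫
        ((D.tev t (X ⊗ Y) ▷ (((X ⊗ Y) ⊗ (D.dual Y ⊗ D.dual X) : C))) ≫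
          (𝟙_ C ◁
            ((α_ X Y (D.dual Y ⊗ D.dual X)).hom ≫
             X ◁ (α_ Y (D.dual Y) (D.dual X)).inv ≫
             X ◁ (D.tev t Y ▷ D.dual X) ≫ X ◁ (λ_ (D.dual X)).hom ≫ D.tev t X))) ⊗≫ 𝟙 _ := by
        rw [whisker_exchange]
    _ = 𝟙 _ ⊗≫ (𝟙 ((X ⊗ Y : C)) ▷ ((D.dual Y ⊗ D.dual X : C))) ⊗≫
        ((α_ X Y (D.dual Y ⊗ D.dual X)).hom ≫
             X ◁ (α_ Y (D.dual Y) (D.dual X)).inv ≫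
             X ◁ (D.tev t Y ▷ D.dual X) ≫ X ◁ (λ_ (D.dual X)).hom ≫ D.tev t X) ⊗≫ 𝟙 _ := by
        rw [← D.lzorro₁ t (X ⊗ Y)]; monoidal
    _ = 𝟙 _ ⊗≫ (X ◁ ((α_ Y (D.dual Y) (D.dual X)).inv ≫
          (D.tev t Y ▷ D.dual X) ≫ (λ_ (D.dual X)).hom) ≫ (t X).hom ▷ D.dual X) ⊗≫
          D.ev (D.dual X) ⊗≫ 𝟙 _ := by
        dsimp only [tev]; monoidal
    _ = 𝟙 _ ⊗≫ ((t X).hom ▷ ((Y ⊗ (D.dual Y ⊗ D.dual X) : C)) ≫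
          D.dual (D.dual X) ◁ ((α_ Y (D.dual Y) (D.dual X)).inv ≫
          (D.tev t Y ▷ D.dual X) ≫ (λ_ (D.dual X)).hom)) ⊗≫ D.ev (D.dual X) ⊗≫ 𝟙 _ := by
        rw [whisker_exchange]
    _ = _ := by dsimp only [tev]; rw [MonoidalCategory.tensorHom_def]; monoidal

end WithT2


theorem wexch {W X Y Z : C} (f : W ⟶ X) (g : Y ⟶ Z) {V : C} (h : X ⊗ Z ⟶ V) :
    W ◁ g ≫ f ▷ Z ≫ h = f ▷ Y ≫ X ◁ g ≫ h := by
  rw [← Category.assoc, whisker_exchange, Category.assoc]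

section Pointwise

variable (t : ∀ X : C, X ≅ D.dual (D.dual X))
variable (nu2Inv : ∀ X Y : C, D.dual (Y ⊗ X) ⟶ D.dual X ⊗ D.dual Y)

theorem pointwise
    (h2a : ∀ X Y : C, D.nu2 X Y ≫ nu2Inv X Y = 𝟙 _)
    (h2b : ∀ X Y : C, nu2Inv X Y ≫ D.nu2 X Y = 𝟙 _) (X Y : C) :
    (((t X).hom ⊗ₘ (t Y).hom) ≫ D.nu2 (D.dual X) (D.dual Y) ≫ D.dualHom (nu2Inv Y X)
      = (t (X ⊗ Y)).hom) ↔ D.nu2 Y X = leftBend D t X Y := by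
  have haveA : (X ⊗ Y) ◁ D.nu2 Y X ≫ D.tev t (X ⊗ Y)
      = (t (X ⊗ Y)).hom ▷ (D.dual Y ⊗ D.dual X) ≫
        (D.dual (D.dual (X ⊗ Y)) ◁ D.nu2 Y X) ≫ D.ev (D.dual (X ⊗ Y)) := by
    dsimp only [tev]
    rw [wexch]
  constructor
  · intro h1
    apply D.eqL t
    rw [D.leftBend_pair, haveA, ← h1]
    simp only [comp_whiskerRight, Category.assoc]
    rw [← wexch, D.dual_pair (nu2Inv Y X), ← MonoidalCategory.whiskerLeft_comp_assoc,
      h2a Y X, MonoidalCategory.whiskerLeft_id, Category.id_comp,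
      D.nu2_pair (D.dual X) (D.dual Y)]
  · intro h2
    have hp := D.leftBend_pair t X Y
    rw [← h2, haveA] at hp
    have hp2 := congrArg (fun m => (X ⊗ Y) ◁ nu2Inv Y X ≫ m) hp
    rw [wexch, ← MonoidalCategory.whiskerLeft_comp_assoc, h2b Y X,
      MonoidalCategory.whiskerLeft_id, Category.id_comp] at hp2
    apply D.eqR
    rw [hp2]
    simp only [comp_whiskerRight, Category.assoc]
    rw [D.dual_pair (nu2Inv Y X)]
    rw [← wexch (D.nu2 (D.dual X) (D.dual Y)) (nu2Inv Y X), ← Category.assoc,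
      D.nu2_pair (D.dual X) (D.dual Y)]
    rw [wexch]
    simp [Category.assoc]

end Pointwise


theorem nu0_ev : D.nu0 ▷ 𝟙_ C ≫ D.ev (𝟙_ C) = (λ_ (𝟙_ C)).hom := by
  dsimp only [nu0]
  calc _ = 𝟙 _ ⊗≫ (D.coev (𝟙_ C) ▷ 𝟙_ C ≫ (α_ (𝟙_ C) (D.dual (𝟙_ C)) (𝟙_ C)).hom ≫
        𝟙_ C ◁ D.ev (𝟙_ C)) ⊗≫ 𝟙 _ := by monoidal
    _ = _ := by rw [D.zorro₁'']; monoidal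

theorem dualHom_leftUnitor (A : C) :
    D.dualHom (λ_ A).hom = (ρ_ (D.dual A)).inv ≫ D.dual A ◁ D.nu0 ≫ D.nu2 A (𝟙_ C) := by
  apply D.eqR
  rw [D.dual_pair]
  simp only [comp_whiskerRight, Category.assoc]
  rw [D.nu2_pair A (𝟙_ C)]
  symm
  calc _ = 𝟙 _ ⊗≫ D.dual A ◁ ((D.nu0 ▷ 𝟙_ C ≫ D.ev (𝟙_ C)) ▷ A) ⊗≫ D.ev A := by monoidal
    _ = _ := by rw [D.nu0_ev]; monoidal

theorem dualHom_rightUnitor (A : C) :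
    D.dualHom (ρ_ A).hom = (λ_ (D.dual A)).inv ≫ D.nu0 ▷ D.dual A ≫ D.nu2 (𝟙_ C) A := by
  apply D.eqR
  rw [D.dual_pair]
  simp only [comp_whiskerRight, Category.assoc]
  rw [D.nu2_pair (𝟙_ C) A]
  symm
  calc _ = 𝟙 _ ⊗≫ (D.nu0 ▷ ((D.dual A ⊗ (A ⊗ 𝟙_ C)) : C) ≫
        D.dual (𝟙_ C) ◁ ((α_ (D.dual A) A (𝟙_ C)).inv ≫ D.ev A ▷ 𝟙_ C ≫ (λ_ (𝟙_ C)).hom)) ⊗≫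
        D.ev (𝟙_ C) ⊗≫ 𝟙 _ := by monoidal
    _ = 𝟙 _ ⊗≫ (𝟙_ C ◁ ((α_ (D.dual A) A (𝟙_ C)).inv ≫ D.ev A ▷ 𝟙_ C ≫ (λ_ (𝟙_ C)).hom) ≫
        D.nu0 ▷ 𝟙_ C) ⊗≫ D.ev (𝟙_ C) ⊗≫ 𝟙 _ := by rw [← whisker_exchange]
    _ = 𝟙 _ ⊗≫ ((α_ (D.dual A) A (𝟙_ C)).inv ≫ D.ev A ▷ 𝟙_ C ≫ (λ_ (𝟙_ C)).hom) ⊗≫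
        (D.nu0 ▷ 𝟙_ C ≫ D.ev (𝟙_ C)) ⊗≫ 𝟙 _ := by monoidal
    _ = _ := by rw [D.nu0_ev]; monoidal

theorem nu2_natural {X X' : C} (f : X ⟶ X') (Y : C) :
    D.dualHom f ▷ D.dual Y ≫ D.nu2 X Y = D.nu2 X' Y ≫ D.dualHom (Y ◁ f) := by
  apply D.eqR
  simp only [comp_whiskerRight, Category.assoc]
  rw [D.nu2_pair X Y, D.dual_pair (Y ◁ f), ← wexch (D.nu2 X' Y) (Y ◁ f),
    D.nu2_pair X' Y]
  calc _ = 𝟙 _ ⊗≫ (D.dualHom f ▷ ((D.dual Y ⊗ (Y ⊗ X)) : C) ≫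
        D.dual X ◁ ((α_ (D.dual Y) Y X).inv ≫ D.ev Y ▷ X ≫ (λ_ X).hom)) ⊗≫
        D.ev X ⊗≫ 𝟙 _ := by monoidal
    _ = 𝟙 _ ⊗≫ (D.dual X' ◁ ((α_ (D.dual Y) Y X).inv ≫ D.ev Y ▷ X ≫ (λ_ X).hom) ≫
        D.dualHom f ▷ X) ⊗≫ D.ev X ⊗≫ 𝟙 _ := by rw [← whisker_exchange]
    _ = 𝟙 _ ⊗≫ D.dual X' ◁ ((α_ (D.dual Y) Y X).inv ≫ D.ev Y ▷ X ≫ (λ_ X).hom) ⊗≫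
        (D.dualHom f ▷ X ≫ D.ev X) ⊗≫ 𝟙 _ := by monoidal
    _ = 𝟙 _ ⊗≫ D.dual X' ◁ ((α_ (D.dual Y) Y X).inv ≫ (D.ev Y ▷ X ≫ 𝟙_ C ◁ f)) ⊗≫
        D.ev X' ⊗≫ 𝟙 _ := by rw [D.dual_pair f]; monoidal
    _ = 𝟙 _ ⊗≫ D.dual X' ◁ ((α_ (D.dual Y) Y X).inv ≫
        ((D.dual Y ⊗ Y) ◁ f ≫ D.ev Y ▷ X')) ⊗≫ D.ev X' ⊗≫ 𝟙 _ := by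
        rw [← whisker_exchange]
    _ = _ := by monoidal


section Unit

variable (t : ∀ X : C, X ≅ D.dual (D.dual X))

theorem unit_of_tensor
    (hnatl : (λ_ (𝟙_ C)).hom ≫ (t (𝟙_ C)).hom
      = (t (𝟙_ C ⊗ 𝟙_ C)).hom ≫ D.dualHom (D.dualHom (λ_ (𝟙_ C)).hom))
    (nu0Inv : D.dual (𝟙_ C) ⟶ 𝟙_ C)
    (h0a : D.nu0 ≫ nu0Inv = 𝟙 _) (h0b : nu0Inv ≫ D.nu0 = 𝟙 _)
    (nu2Inv : ∀ X Y : C, D.dual (Y ⊗ X) ⟶ D.dual X ⊗ D.dual Y)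
    (h2a : ∀ X Y : C, D.nu2 X Y ≫ nu2Inv X Y = 𝟙 _)
    (htensor : ((t (𝟙_ C)).hom ⊗ₘ (t (𝟙_ C)).hom) ≫ D.nu2 (D.dual (𝟙_ C)) (D.dual (𝟙_ C)) ≫
        D.dualHom (nu2Inv (𝟙_ C) (𝟙_ C)) = (t (𝟙_ C ⊗ 𝟙_ C)).hom) :
    (t (𝟙_ C)).hom = D.nu0 ≫ D.dualHom nu0Inv := by
  have hd1 : D.dualHom (λ_ (𝟙_ C)).hom ≫ nu2Inv (𝟙_ C) (𝟙_ C)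
      = (ρ_ (D.dual (𝟙_ C))).inv ≫ D.dual (𝟙_ C) ◁ D.nu0 := by
    rw [D.dualHom_leftUnitor, Category.assoc, Category.assoc, h2a, Category.comp_id]
  have hd2 : D.nu2 (𝟙_ C) (D.dual (𝟙_ C))
      = nu0Inv ▷ D.dual (D.dual (𝟙_ C)) ≫ (λ_ (D.dual (D.dual (𝟙_ C)))).hom ≫
        D.dualHom (ρ_ (D.dual (𝟙_ C))).hom := by
    rw [D.dualHom_rightUnitor, Iso.hom_inv_id_assoc, ← comp_whiskerRight_assoc, h0b,
      MonoidalCategory.id_whiskerRight, Category.id_comp]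
  have key : (λ_ (𝟙_ C)).hom ≫ (t (𝟙_ C)).hom
      = ((t (𝟙_ C)).hom ⊗ₘ (t (𝟙_ C)).hom) ≫
        (D.dualHom D.nu0 ≫ nu0Inv) ▷ D.dual (D.dual (𝟙_ C)) ≫
        (λ_ (D.dual (D.dual (𝟙_ C)))).hom := by
    calc (λ_ (𝟙_ C)).hom ≫ (t (𝟙_ C)).hom
        = (t (𝟙_ C ⊗ 𝟙_ C)).hom ≫ D.dualHom (D.dualHom (λ_ (𝟙_ C)).hom) := hnatl
      _ = ((t (𝟙_ C)).hom ⊗ₘ (t (𝟙_ C)).hom) ≫ D.nu2 (D.dual (𝟙_ C)) (D.dual (𝟙_ C)) ≫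
          D.dualHom (nu2Inv (𝟙_ C) (𝟙_ C)) ≫ D.dualHom (D.dualHom (λ_ (𝟙_ C)).hom) := by
          rw [← htensor]; simp only [Category.assoc]
      _ = ((t (𝟙_ C)).hom ⊗ₘ (t (𝟙_ C)).hom) ≫ D.nu2 (D.dual (𝟙_ C)) (D.dual (𝟙_ C)) ≫
          D.dualHom (D.dualHom (λ_ (𝟙_ C)).hom ≫ nu2Inv (𝟙_ C) (𝟙_ C)) := by
          rw [D.dualHom_comp]
      _ = ((t (𝟙_ C)).hom ⊗ₘ (t (𝟙_ C)).hom) ≫ D.nu2 (D.dual (𝟙_ C)) (D.dual (𝟙_ C)) ≫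
          D.dualHom (D.dual (𝟙_ C) ◁ D.nu0) ≫ D.dualHom (ρ_ (D.dual (𝟙_ C))).inv := by
          rw [hd1, D.dualHom_comp]
      _ = ((t (𝟙_ C)).hom ⊗ₘ (t (𝟙_ C)).hom) ≫
          (D.dualHom D.nu0 ▷ D.dual (D.dual (𝟙_ C)) ≫ D.nu2 (𝟙_ C) (D.dual (𝟙_ C))) ≫
          D.dualHom (ρ_ (D.dual (𝟙_ C))).inv := by
          rw [D.nu2_natural D.nu0 (D.dual (𝟙_ C))]; simp only [Category.assoc]
      _ = _ := by
          rw [hd2]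
          simp only [Category.assoc, ← D.dualHom_comp, Iso.inv_hom_id, D.dualHom_id,
            Category.comp_id, comp_whiskerRight_assoc]
  -- cancel to get the scalar identity
  have key2 : ((t (𝟙_ C)).hom ≫ D.dualHom D.nu0 ≫ nu0Inv) ▷ 𝟙_ C ≫
      (𝟙_ C ◁ (t (𝟙_ C)).hom ≫ (λ_ (D.dual (D.dual (𝟙_ C)))).hom)
      = 𝟙 _ ≫ (𝟙_ C ◁ (t (𝟙_ C)).hom ≫ (λ_ (D.dual (D.dual (𝟙_ C)))).hom) := by
    have lhs := key
    rw [← MonoidalCategory.leftUnitor_naturality] at lhs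
    rw [Category.id_comp]
    conv_rhs => rw [lhs, MonoidalCategory.tensorHom_def]
    rw [Category.assoc, wexch, ← comp_whiskerRight_assoc]
  have key3 : ((t (𝟙_ C)).hom ≫ D.dualHom D.nu0 ≫ nu0Inv) ▷ 𝟙_ C = 𝟙 (𝟙_ C ⊗ 𝟙_ C) := by
    have : IsIso (𝟙_ C ◁ (t (𝟙_ C)).hom ≫ (λ_ (D.dual (D.dual (𝟙_ C)))).hom) := by
      infer_instance
    rw [← cancel_mono (𝟙_ C ◁ (t (𝟙_ C)).hom ≫ (λ_ (D.dual (D.dual (𝟙_ C)))).hom)]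
    simpa using key2
  have key4 : (t (𝟙_ C)).hom ≫ D.dualHom D.nu0 ≫ nu0Inv = 𝟙 (𝟙_ C) := by
    have h := congrArg (fun m => m ≫ (ρ_ (𝟙_ C)).hom) key3
    rw [MonoidalCategory.rightUnitor_naturality, Category.id_comp] at h
    exact (cancel_epi (ρ_ (𝟙_ C)).hom).mp (by simpa using h)
  have key5 : (D.nu0 ≫ D.dualHom nu0Inv) ≫ D.dualHom D.nu0 ≫ nu0Inv = 𝟙 (𝟙_ C) := by
    rw [Category.assoc, ← Category.assoc (D.dualHom nu0Inv), ← D.dualHom_comp, h0a,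
      D.dualHom_id, Category.id_comp, h0a]
  have hw : D.dualHom D.nu0 ≫ nu0Inv = (t (𝟙_ C)).inv := by
    rw [← Iso.hom_comp_eq_id]; exact key4
  calc (t (𝟙_ C)).hom = ((D.nu0 ≫ D.dualHom nu0Inv) ≫ (t (𝟙_ C)).inv) ≫ (t (𝟙_ C)).hom := by
        rw [← hw, key5, Category.id_comp]
    _ = D.nu0 ≫ D.dualHom nu0Inv := by simp

end Unit

end RightRigidData

end Helpers
/-- **Statement 9.** Let `t : Id ⇒ (·)^∨∨` be a natural isomorphism on a right rigid
monoidal category.  Then `t` is monoidal with respect to the canonical monoidal structure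
`(ω², ω⁰)` on the double-dual functor (i.e. `t` is a pivotal structure) if and only if for
all `X, Y` the right-duality bending morphism `ν²_{Y,X} : Y^∨ ⊗ X^∨ → (X ⊗ Y)^∨` coincides
with the left-duality bending morphism built from `ẽv`, `c̃oev`. -/
theorem statement9 {C : Type u} [Category.{v} C] [MonoidalCategory C]
    (D : RightRigidData C) (t : ∀ X : C, X ≅ D.dual (D.dual X))
    (hnat : ∀ {X Y : C} (f : X ⟶ Y), f ≫ (t Y).hom = (t X).hom ≫ D.dualHom (D.dualHom f))
    -- the (unique) inverses of `ν⁰` and `ν²`, entering the coherence data `ω⁰`, `ω²`: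
    (nu0Inv : D.dual (𝟙_ C) ⟶ 𝟙_ C)
    (h0a : D.nu0 ≫ nu0Inv = 𝟙 _) (h0b : nu0Inv ≫ D.nu0 = 𝟙 _)
    (nu2Inv : ∀ X Y : C, D.dual (Y ⊗ X) ⟶ D.dual X ⊗ D.dual Y)
    (h2a : ∀ X Y : C, D.nu2 X Y ≫ nu2Inv X Y = 𝟙 _)
    (h2b : ∀ X Y : C, nu2Inv X Y ≫ D.nu2 X Y = 𝟙 _) :
    ((t (𝟙_ C)).hom = D.nu0 ≫ D.dualHom nu0Inv ∧
     (∀ X Y : C,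
        ((t X).hom ⊗ₘ (t Y).hom) ≫ D.nu2 (D.dual X) (D.dual Y) ≫ D.dualHom (nu2Inv Y X)
          = (t (X ⊗ Y)).hom)) ↔
    (∀ X Y : C, D.nu2 Y X = leftBend D t X Y) := by
  constructor
  · rintro ⟨_, ht⟩ X Y
    exact (D.pointwise t nu2Inv h2a h2b X Y).mp (ht X Y)
  · intro hb
    have ht : ∀ X Y : C,
        ((t X).hom ⊗ₘ (t Y).hom) ≫ D.nu2 (D.dual X) (D.dual Y) ≫ D.dualHom (nu2Inv Y X)
          = (t (X ⊗ Y)).hom :=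
      fun X Y => (D.pointwise t nu2Inv h2a h2b X Y).mpr (hb X Y)
    exact ⟨D.unit_of_tensor t (hnat (λ_ (𝟙_ C)).hom) nu0Inv h0a h0b nu2Inv h2a
      (ht (𝟙_ C) (𝟙_ C)), ht⟩
end
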